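/- Suppose u : ℝ → ℂ is a C³ function with u''' − v₁·u' absolutely continuous, solving (u''' − v₁ u')' + v₀ u = λ u on ℝ with v₀, v₁ real-valued and λ real. Define F_u(r) = (u'''(r) − v₁(r)u'(r))·conj(u(r)) − u''(r)·conj(u'(r)). Then Im F_u(r) = Im F_u(−r) for all r. -/

import Mathlib

open Complex

/-- For a `C³` solution `u` of `(u''' - v₁ u')' + v₀ u = λ u` with real `v₀, v₁, λ`,
the quantity `Im F_u(r)` with
`F_u(r) = (u'''(r) - v₁(r) u'(r)) conj(u(r)) - u''(r) conj(u'(r))`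
satisfies `Im F_u(r) = Im F_u(-r)` for all `r`. -/
theorem wronskian_imaginary_part_symmetric (u : ℝ → ℂ) (v₀ v₁ : ℝ → ℝ) (lam : ℝ)
    (hu : ContDiff ℝ 3 u)
    (heq : ∀ x : ℝ,
      HasDerivAt (fun t => iteratedDeriv 3 u t - (v₁ t : ℂ) * deriv u t)
        ((lam : ℂ) * u x - (v₀ x : ℂ) * u x) x)
    (r : ℝ) :
    ((iteratedDeriv 3 u r - (v₁ r : ℂ) * deriv u r) * (starRingEnd ℂ) (u r) -
        iteratedDeriv 2 u r * (starRingEnd ℂ) (deriv u r)).im =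
      ((iteratedDeriv 3 u (-r) - (v₁ (-r) : ℂ) * deriv u (-r)) * (starRingEnd ℂ) (u (-r)) -
        iteratedDeriv 2 u (-r) * (starRingEnd ℂ) (deriv u (-r))).im := by
  -- Basic differentiability facts
  have hu' : ContDiff ℝ 2 (deriv u) := by
    have h : ContDiff ℝ (2 + 1) u := by norm_num; exact hu
    exact (contDiff_succ_iff_deriv.mp h).2.2
  have hu'' : ContDiff ℝ 1 (iteratedDeriv 2 u) := by
    have : ContDiff ℝ 1 (deriv (deriv u)) := by
      have h : ContDiff ℝ (1 + 1) (deriv u) := by norm_num; exact hu'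
      exact (contDiff_succ_iff_deriv.mp h).2.2
    simpa [iteratedDeriv_succ, iteratedDeriv_one] using this
  have hu1 : ∀ x, HasDerivAt u (deriv u x) x := fun x =>
    ((hu.differentiable (by norm_num)) x).hasDerivAt
  have hu2 : ∀ x, HasDerivAt (deriv u) (iteratedDeriv 2 u x) x := fun x => by
    have h := ((hu'.differentiable (by norm_num)) x).hasDerivAt
    simpa [iteratedDeriv_succ, iteratedDeriv_one] using h
  have hu3 : ∀ x, HasDerivAt (iteratedDeriv 2 u) (iteratedDeriv 3 u x) x := fun x => by
    have h := ((hu''.differentiable (by norm_num)) x).hasDerivAt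
    simpa [iteratedDeriv_succ, iteratedDeriv_one] using h
  -- conjugation preserves HasDerivAt
  have hconj : ∀ (f : ℝ → ℂ) (f' : ℂ) (x : ℝ), HasDerivAt f f' x →
      HasDerivAt (fun t => (starRingEnd ℂ) (f t)) ((starRingEnd ℂ) f') x := by
    intro f f' x hf
    have := (Complex.conjCLE.toContinuousLinearMap.hasFDerivAt.comp_hasDerivAt x hf)
    exact this
  set F : ℝ → ℂ := fun t =>
    (iteratedDeriv 3 u t - (v₁ t : ℂ) * deriv u t) * (starRingEnd ℂ) (u t) -
      iteratedDeriv 2 u t * (starRingEnd ℂ) (deriv u t) with hF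
  have hderiv : ∀ x, HasDerivAt (fun t => (F t).im) 0 x := by
    intro x
    have h1 : HasDerivAt F
        (((lam : ℂ) * u x - (v₀ x : ℂ) * u x) * (starRingEnd ℂ) (u x) +
          (iteratedDeriv 3 u x - (v₁ x : ℂ) * deriv u x) * (starRingEnd ℂ) (deriv u x) -
          (iteratedDeriv 3 u x * (starRingEnd ℂ) (deriv u x) +
            iteratedDeriv 2 u x * (starRingEnd ℂ) (iteratedDeriv 2 u x))) x := by
      exact ((heq x).mul (hconj u (deriv u x) x (hu1 x))).sub
        ((hu3 x).mul (hconj (deriv u) (iteratedDeriv 2 u x) x (hu2 x)))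
    have h2 : HasDerivAt (fun t => (F t).im)
        ((((lam : ℂ) * u x - (v₀ x : ℂ) * u x) * (starRingEnd ℂ) (u x) +
          (iteratedDeriv 3 u x - (v₁ x : ℂ) * deriv u x) * (starRingEnd ℂ) (deriv u x) -
          (iteratedDeriv 3 u x * (starRingEnd ℂ) (deriv u x) +
            iteratedDeriv 2 u x * (starRingEnd ℂ) (iteratedDeriv 2 u x))).im) x := by
      exact Complex.imCLM.hasFDerivAt.comp_hasDerivAt x h1
    convert h2 using 1
    have key : (((lam : ℂ) * u x - (v₀ x : ℂ) * u x) * (starRingEnd ℂ) (u x) +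
          (iteratedDeriv 3 u x - (v₁ x : ℂ) * deriv u x) * (starRingEnd ℂ) (deriv u x) -
          (iteratedDeriv 3 u x * (starRingEnd ℂ) (deriv u x) +
            iteratedDeriv 2 u x * (starRingEnd ℂ) (iteratedDeriv 2 u x)))
        = (((lam - v₀ x) * Complex.normSq (u x) - v₁ x * Complex.normSq (deriv u x) -
            Complex.normSq (iteratedDeriv 2 u x) : ℝ) : ℂ) := by
      push_cast
      rw [← Complex.mul_conj (u x), ← Complex.mul_conj (deriv u x),
        ← Complex.mul_conj (iteratedDeriv 2 u x)]
      ring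
    rw [key, Complex.ofReal_im]
  have hconst : ∀ x y : ℝ, (F x).im = (F y).im := by
    have := is_const_of_deriv_eq_zero (f := fun t => (F t).im)
      (fun x => (hderiv x).differentiableAt) (fun x => (hderiv x).deriv)
    exact this
  exact hconst r (-r)
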